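/- arXiv:2004.01493 — 2 statements merged into one kernel-verified Lean document; each statement's English description precedes it below -/
import Mathlib

section
/- A substring P of T is a maximal repeat of T if and only if (i) the node u_P is explicit, i.e., |children(P)| ≥ 2, and (ii) rank(S_start, b) ≠ rank(S_start, e), where interval(P) = [b, e]. -/
/-- 1-based access to the `i`-th character of `T`. -/
def idx (T : List ℕ) (i : ℕ) : ℕ := T.getD (i - 1) 0

/-- The suffix `T[i..n]` (1-based). -/
def sufx (T : List ℕ) (i : ℕ) : List ℕ := T.drop (i - 1)

/-- Occurrence positions of `P` in `T`: `Occ(T,P) = {i ∈ [1, n−|P|+1] : P = T[i..i+|P|−1]}`. -/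
def OccF (T P : List ℕ) : Finset ℕ :=
  (Finset.Icc 1 (T.length - P.length + 1)).filter (fun i => P <+: T.drop (i - 1))

/-- `children(P) = {Pc : c ∈ Σ, Pc is a substring of T}`. -/
def childrenSet (σ : ℕ) (T P : List ℕ) : Set (List ℕ) :=
  {Q | ∃ c ∈ Finset.Icc 1 σ, Q = P ++ [c] ∧ (P ++ [c]) <:+: T}

/-- Starting positions of the maximal runs of equal characters in `L[1..n]`. -/
def SstartSet (n : ℕ) (L : ℕ → ℕ) : Finset ℕ :=
  (Finset.Icc 1 n).filter (fun i => i = 1 ∨ L i ≠ L (i - 1))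

/-- `rank(S, i) = |{j ∈ S : j ≤ i}|`. -/
def rankOf (S : Finset ℕ) (i : ℕ) : ℕ := (S.filter (fun j => j ≤ i)).card

/-- `(c, p, q)` is an answer of the range distinct query `RD(S, b, e)`:
`c` occurs in `S[b..e]`, and `p`, `q` are the first and last occurrences of `c` in `[b,e]`. -/
def RDmem (S : ℕ → ℕ) (b e c p q : ℕ) : Prop :=
  p ∈ Finset.Icc b e ∧ S p = c ∧ (∀ i ∈ Finset.Icc b e, S i = c → p ≤ i) ∧
  q ∈ Finset.Icc b e ∧ S q = c ∧ (∀ i ∈ Finset.Icc b e, S i = c → i ≤ q)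

/-- `[b,e]` is the suffix-tree interval of `P`: the positions `i ∈ [1,n]` whose suffix
`T[SA[i]..n]` has `P` as a prefix are exactly `{b,…,e}`. -/
def isIntervalOf (n : ℕ) (T : List ℕ) (SA : ℕ → ℕ) (P : List ℕ) (b e : ℕ) : Prop :=
  1 ≤ b ∧ e ≤ n ∧ ∀ i ∈ Finset.Icc 1 n, (P <+: sufx T (SA i) ↔ i ∈ Finset.Icc b e)

/-- Length of the longest common prefix of two lists. -/
def lcpLen : List ℕ → List ℕ → ℕ
  | a :: as, b :: bs => if a = b then lcpLen as bs + 1 else 0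
  | _, _ => 0

/-- `𝓛_t`: substrings of `T` of length `t` whose suffix-tree node is explicit. -/
def LsetD (σ t : ℕ) (T : List ℕ) : Set (List ℕ) :=
  {P | P <:+: T ∧ P.length = t ∧ 2 ≤ (childrenSet σ T P).ncard}

/-- `K_t = ⋃_{P ∈ 𝓛_t} children(P)`. -/
def KsetD (σ t : ℕ) (T : List ℕ) : Set (List ℕ) :=
  {Q | ∃ P ∈ LsetD σ t T, Q ∈ childrenSet σ T P}

/-- `K'_t`: members of `K_t` that are not the last child of their parent, i.e. whose
interval has a right endpoint different from that of the parent's interval. -/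
def KpsetD (σ n t : ℕ) (T : List ℕ) (SA : ℕ → ℕ) : Set (List ℕ) :=
  {Q | ∃ P ∈ LsetD σ t T, Q ∈ childrenSet σ T P ∧
    ∃ b e b' e' : ℕ, isIntervalOf n T SA P b e ∧ isIntervalOf n T SA Q b' e' ∧ e' ≠ e}


lemma occ_mem {T P : List ℕ} (hP : P ≠ []) (j : ℕ) :
    j ∈ OccF T P ↔ (1 ≤ j ∧ j ≤ T.length ∧ P <+: T.drop (j - 1)) := by
  have hl : 1 ≤ P.length := List.length_pos_iff.mpr hP
  constructor
  · rintro hj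
    rw [OccF, Finset.mem_filter, Finset.mem_Icc] at hj
    obtain ⟨⟨h1, h2⟩, h3⟩ := hj
    have hlen : P.length ≤ (T.drop (j-1)).length := h3.length_le
    rw [List.length_drop] at hlen
    exact ⟨h1, by omega, h3⟩
  · rintro ⟨h1, h2, h3⟩
    have hlen : P.length ≤ (T.drop (j-1)).length := h3.length_le
    rw [List.length_drop] at hlen
    rw [OccF, Finset.mem_filter, Finset.mem_Icc]
    exact ⟨⟨h1, by omega⟩, h3⟩

lemma infix_iff_occ {T P : List ℕ} (hP : P ≠ []) :
    P <:+: T ↔ ∃ j, j ∈ OccF T P := by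
  have hl : 1 ≤ P.length := List.length_pos_iff.mpr hP
  constructor
  · rintro ⟨s, t, hst⟩
    refine ⟨s.length + 1, (occ_mem hP _).mpr ⟨by omega, ?_, ?_⟩⟩
    · have : T.length = s.length + (P.length + t.length) := by
        rw [← hst]; simp [List.length_append]
      omega
    · have : T.drop s.length = P ++ t := by
        rw [← hst, List.append_assoc, List.drop_left]
      simpa [this] using (⟨t, rfl⟩ : P <+: P ++ t)
  · rintro ⟨j, hj⟩
    rw [occ_mem hP] at hj
    exact hj.2.2.isInfix.trans (List.drop_suffix _ _).isInfix

lemma idx_eq_getElem {T : List ℕ} {j : ℕ} (h1 : 1 ≤ j) (h2 : j ≤ T.length) :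
    idx T j = T[j-1]'(by omega) := List.getD_eq_getElem T 0 (by omega)

lemma idx_mem {T : List ℕ} {j : ℕ} (h1 : 1 ≤ j) (h2 : j ≤ T.length) :
    idx T j ∈ T := by
  rw [idx_eq_getElem h1 h2]; exact List.getElem_mem _

lemma prefix_drop_char {T P : List ℕ} {j k : ℕ} (h1 : 1 ≤ j)
    (h3 : P <+: T.drop (j - 1)) (hk : k < P.length) :
    idx T (j + k) = P[k] := by
  have hlen : P.length ≤ T.length - (j-1) := by
    have := h3.length_le; rwa [List.length_drop] at this
  have hjk : j - 1 + k < T.length := by omega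
  have h4 : (T.drop (j-1))[k]'(by rw [List.length_drop]; omega) = P[k] :=
    (h3.getElem hk).symm
  rw [List.getElem_drop] at h4
  rw [idx_eq_getElem (by omega) (by omega)]
  rw [← h4]
  congr 1
  omega

-- extend an occurrence of P to an occurrence of P ++ [c]
lemma occ_extend {T P : List ℕ} (hP : P ≠ []) {j : ℕ} (hj : j ∈ OccF T P)
    (hle : j + P.length ≤ T.length) :
    j ∈ OccF T (P ++ [idx T (j + P.length)]) := by
  obtain ⟨h1, h2, h3⟩ := (occ_mem hP j).mp hj
  obtain ⟨rest, hrest⟩ := h3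
  have hlend : (T.drop (j-1)).length = T.length - (j-1) := List.length_drop
  have hrlen : rest.length = T.length - (j-1) - P.length := by
    have := congrArg List.length hrest
    simp [List.length_append] at this
    omega
  have hrne : rest ≠ [] := by
    intro h; rw [h] at hrlen; simp at hrlen; omega
  obtain ⟨c, rest', hc⟩ := List.exists_cons_of_ne_nil hrne
  have hpre : (P ++ [c]) <+: T.drop (j - 1) := by
    refine ⟨rest', ?_⟩
    rw [← hrest, hc]; simp
  have hcval : idx T (j + P.length) = c := by
    have := prefix_drop_char h1 hpre (k := P.length) (by simp)
    simpa using this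
  rw [hcval]
  exact (occ_mem (by simp) j).mpr ⟨h1, h2, hpre⟩

lemma occ_child_subset {T P : List ℕ} {c : ℕ} :
    OccF T (P ++ [c]) ⊆ OccF T P := by
  intro j hj
  by_cases hP : P = []
  · subst hP
    obtain ⟨h1, h2, h3⟩ := (occ_mem (by simp) j).mp hj
    simp [OccF, Finset.mem_Icc]; omega
  obtain ⟨h1, h2, h3⟩ := (occ_mem (by simp) j).mp hj
  exact (occ_mem hP j).mpr ⟨h1, h2, (List.prefix_append P [c]).trans h3⟩

lemma occ_child_char {T P : List ℕ} {c j : ℕ} (hj : j ∈ OccF T (P ++ [c])) :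
    idx T (j + P.length) = c := by
  obtain ⟨h1, h2, h3⟩ := (occ_mem (by simp) j).mp hj
  have := prefix_drop_char h1 h3 (k := P.length) (by simp)
  simpa using this

lemma drop_cons_idx {T : List ℕ} {j : ℕ} (h1 : 1 ≤ j) (h2 : j ≤ T.length) :
    T.drop (j - 1) = idx T j :: T.drop j := by
  have h : j - 1 < T.length := by omega
  rw [List.drop_eq_getElem_cons h, idx_eq_getElem h1 h2]
  have hj' : j - 1 + 1 = j := by omega
  rw [hj']

lemma occ_cons_card {T P : List ℕ} (hP : P ≠ []) (c : ℕ) :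
    (OccF T (c :: P)).card
      = ((OccF T P).filter (fun j => 2 ≤ j ∧ idx T (j-1) = c)).card := by
  have hl : 1 ≤ P.length := List.length_pos_iff.mpr hP
  refine Finset.card_bij' (fun j _ => j + 1) (fun j _ => j - 1) ?_ ?_ ?_ ?_
  · intro j hj
    show j + 1 ∈ _
    obtain ⟨h1, h2, h3⟩ := (occ_mem (by simp) j).mp hj
    have hlen : (c :: P).length ≤ T.length - (j-1) := by
      have := h3.length_le; rwa [List.length_drop] at this
    simp only [List.length_cons] at hlen
    rw [drop_cons_idx h1 h2, List.cons_prefix_cons] at h3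
    rw [Finset.mem_filter]
    refine ⟨(occ_mem hP (j+1)).mpr ⟨by omega, by omega, ?_⟩, by omega, by simpa using h3.1.symm⟩
    simpa using h3.2
  · intro j hj
    show j - 1 ∈ _
    rw [Finset.mem_filter] at hj
    obtain ⟨hjo, hj2, hjc⟩ := hj
    obtain ⟨h1, h2, h3⟩ := (occ_mem hP j).mp hjo
    refine (occ_mem (P := c :: P) (by simp) (j-1)).mpr ⟨by omega, by omega, ?_⟩
    have : T.drop (j - 1 - 1) = idx T (j-1) :: T.drop (j-1) := by
      have := drop_cons_idx (T := T) (j := j - 1) (by omega) (by omega)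
      simpa using this
    rw [this, hjc, List.cons_prefix_cons]
    exact ⟨rfl, h3⟩
  · intro a _
    show a + 1 - 1 = a
    omega
  · intro a ha
    rw [Finset.mem_filter] at ha
    show a - 1 + 1 = a
    omega

lemma children_ncard (σ : ℕ) (T P : List ℕ) :
    (childrenSet σ T P).ncard
      = ((Finset.Icc 1 σ).filter (fun c => (P ++ [c]) <:+: T)).card := by
  have h : childrenSet σ T P
      = ↑(((Finset.Icc 1 σ).filter (fun c => (P ++ [c]) <:+: T)).image
          (fun c => P ++ [c])) := by
    ext Q
    simp only [childrenSet, Set.mem_setOf_eq, Finset.coe_image, Set.mem_image,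
      Finset.mem_coe, Finset.mem_filter]
    constructor
    · rintro ⟨c, hc, rfl, hinf⟩; exact ⟨c, ⟨hc, hinf⟩, rfl⟩
    · rintro ⟨c, ⟨hc, hinf⟩, rfl⟩; exact ⟨c, hc, rfl, hinf⟩
  rw [h, Set.ncard_coe_finset]
  exact Finset.card_image_of_injOn (fun a _ b _ hab => by simpa using hab)

lemma rank_ne_iff {n b e : ℕ} {L : ℕ → ℕ} (hb : 1 ≤ b) (he : e ≤ n) (hbe : b ≤ e) :
    rankOf (SstartSet n L) b ≠ rankOf (SstartSet n L) e
      ↔ ∃ i, b < i ∧ i ≤ e ∧ L i ≠ L (i - 1) := by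
  constructor
  · intro hne
    by_contra hno
    push_neg at hno
    apply hne
    unfold rankOf
    congr 1
    apply Finset.Subset.antisymm
    · exact Finset.monotone_filter_right _ (fun j hj => by omega)
    · intro j hj
      rw [Finset.mem_filter] at hj ⊢
      obtain ⟨hjS, hje⟩ := hj
      refine ⟨hjS, ?_⟩
      by_contra hjb
      push_neg at hjb
      have := hno j hjb hje
      rw [SstartSet, Finset.mem_filter] at hjS
      rcases hjS.2 with h1 | h2
      · omega
      · exact h2 this
  · rintro ⟨i, h1, h2, h3⟩
    have hiS : i ∈ SstartSet n L := by
      rw [SstartSet, Finset.mem_filter, Finset.mem_Icc]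
      exact ⟨⟨by omega, by omega⟩, Or.inr h3⟩
    have hss : (SstartSet n L).filter (fun j => j ≤ b)
        ⊂ (SstartSet n L).filter (fun j => j ≤ e) := by
      rw [Finset.ssubset_iff_of_subset
        (Finset.monotone_filter_right _ (fun j hj => by omega))]
      exact ⟨i, Finset.mem_filter.mpr ⟨hiS, h2⟩, fun hmem =>
        absurd (Finset.mem_filter.mp hmem).2 (by omega)⟩
    exact Nat.ne_of_lt (Finset.card_lt_card hss)

lemma const_of_no_break {L : ℕ → ℕ} {b e : ℕ}
    (h : ¬∃ i, b < i ∧ i ≤ e ∧ L i ≠ L (i - 1)) :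
    ∀ i, b ≤ i → i ≤ e → L i = L b := by
  push_neg at h
  intro i hbi
  induction i, hbi using Nat.le_induction with
  | base => intro _; rfl
  | succ i hbi ih =>
    intro hie
    have h2 := h (i + 1) (by omega) hie
    simp only [Nat.add_sub_cancel] at h2
    rw [h2]
    exact ih (by omega)

theorem stmt13
    (σ n : ℕ) (T : List ℕ)
    (hn : 2 ≤ n) (hlen : T.length = n)
    (halpha : ∀ c ∈ T, c ∈ Finset.Icc 1 σ)
    (hocc : ∀ c ∈ Finset.Icc 1 σ, c ∈ T)
    (hdollar : ∀ i ∈ Finset.Icc 1 (n - 1), idx T i ≠ idx T n)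
    (SA : ℕ → ℕ)
    (hSA_mem : ∀ i ∈ Finset.Icc 1 n, SA i ∈ Finset.Icc 1 n)
    (hSA_surj : ∀ j ∈ Finset.Icc 1 n, ∃ i ∈ Finset.Icc 1 n, SA i = j)
    (hSA_sorted : ∀ i j, i ∈ Finset.Icc 1 n → j ∈ Finset.Icc 1 n → i < j →
      List.Lex (· < ·) (sufx T (SA i)) (sufx T (SA j)))
    (LF : ℕ → ℕ)
    (hLF_mem : ∀ i ∈ Finset.Icc 1 n, LF i ∈ Finset.Icc 1 n)
    (hLF : ∀ i ∈ Finset.Icc 1 n, SA i ≠ 1 → SA (LF i) = SA i - 1)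
    (hLF1 : ∀ i ∈ Finset.Icc 1 n, SA i = 1 → SA (LF i) = n)
    (L : ℕ → ℕ)
    (hL : ∀ i ∈ Finset.Icc 1 n, L i = idx T (SA (LF i)))
    (P : List ℕ) (hPne : P ≠ []) (hPsub : P <:+: T)
    (b e : ℕ) (hbe : isIntervalOf n T SA P b e) :
    (2 ≤ (OccF T P).card ∧
      ∀ c ∈ Finset.Icc 1 σ,
        (OccF T (c :: P)).card < (OccF T P).card ∧
        (OccF T (P ++ [c])).card < (OccF T P).card)
    ↔ (2 ≤ (childrenSet σ T P).ncard ∧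
        rankOf (SstartSet n L) b ≠ rankOf (SstartSet n L) e) := by
  obtain ⟨hb1, hen, hint⟩ := hbe
  have hl : 1 ≤ P.length := List.length_pos_iff.mpr hPne
  have hinj : ∀ i ∈ Finset.Icc 1 n, ∀ j ∈ Finset.Icc 1 n, SA i = SA j → i = j := by
    intro i hi j hj hij
    by_contra hne
    have lex_irrefl : ∀ l : List ℕ, ¬ List.Lex (· < ·) l l := fun l => by
      rw [← List.lt_iff_lex_lt]; exact List.lt_irrefl l
    rcases Nat.lt_or_ge i j with h | h
    · have hs := hSA_sorted i j hi hj h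
      rw [hij] at hs
      exact lex_irrefl _ hs
    · have hji : j < i := by omega
      have hs := hSA_sorted j i hj hi hji
      rw [hij] at hs
      exact lex_irrefl _ hs
  have hOccIff : ∀ j, j ∈ OccF T P ↔ ∃ i ∈ Finset.Icc b e, SA i = j := by
    intro j
    constructor
    · intro hj
      obtain ⟨h1, h2, h3⟩ := (occ_mem hPne j).mp hj
      rw [hlen] at h2
      obtain ⟨i, hi, hSAi⟩ := hSA_surj j (Finset.mem_Icc.mpr ⟨h1, h2⟩)
      refine ⟨i, ?_, hSAi⟩
      rw [← hint i hi, sufx, hSAi]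
      exact h3
    · rintro ⟨i, hi, rfl⟩
      have hi' : i ∈ Finset.Icc 1 n := by
        rw [Finset.mem_Icc] at hi ⊢; omega
      have hpre := (hint i hi').mpr hi
      have hSAi := hSA_mem i hi'
      rw [Finset.mem_Icc] at hSAi
      exact (occ_mem hPne _).mpr ⟨hSAi.1, by omega, hpre⟩
  have hbee : b ≤ e := by
    obtain ⟨j, hj⟩ := (infix_iff_occ hPne).mp hPsub
    obtain ⟨i, hi, _⟩ := (hOccIff j).mp hj
    rw [Finset.mem_Icc] at hi; omega
  have hIccsub : Finset.Icc b e ⊆ Finset.Icc 1 n := by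
    intro i hi; rw [Finset.mem_Icc] at *; omega
  have hImg : OccF T P = (Finset.Icc b e).image SA := by
    ext j
    rw [hOccIff, Finset.mem_image]
  have hcardP : (OccF T P).card = e + 1 - b := by
    rw [hImg, Finset.card_image_of_injOn (fun x hx y hy hxy =>
      hinj x (hIccsub hx) y (hIccsub hy) hxy), Nat.card_Icc]
  have hSAOcc : ∀ i ∈ Finset.Icc b e, SA i ∈ OccF T P := fun i hi =>
    (hOccIff _).mpr ⟨i, hi, rfl⟩
  set C := (Finset.Icc 1 σ).filter (fun c => (P ++ [c]) <:+: T) with hC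
  have hchild : (childrenSet σ T P).ncard = C.card := children_ncard σ T P
  have hchar_sigma : ∀ j, 1 ≤ j → j ≤ n → idx T j ∈ Finset.Icc 1 σ := fun j h1 h2 =>
    halpha _ (idx_mem h1 (by omega))
  have hRight : (2 ≤ (OccF T P).card ∧ ∀ c ∈ Finset.Icc 1 σ,
      (OccF T (P ++ [c])).card < (OccF T P).card) ↔ 2 ≤ C.card := by
    constructor
    · rintro ⟨h2, hright⟩
      by_contra hC1
      push_neg at hC1
      have hC1' : C.card ≤ 1 := by omega
      have hnoend : ∀ j ∈ OccF T P, j + P.length ≤ n := by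
        by_contra hex
        push_neg at hex
        obtain ⟨j0, hj0, hj0n⟩ := hex
        obtain ⟨ha1, ha2, ha3⟩ := (occ_mem hPne j0).mp hj0
        have hlen0 : P.length ≤ T.length - (j0 - 1) := by
          have := ha3.length_le; rwa [List.length_drop] at this
        have hend : j0 + P.length = n + 1 := by omega
        have hlast : P[P.length - 1]'(by omega) = idx T n := by
          have hh := prefix_drop_char ha1 ha3 (k := P.length - 1) (by omega)
          rw [← hh]
          congr 1
          omega
        have huni : ∀ j ∈ OccF T P, j = j0 := by
          intro j hj
          obtain ⟨hb1', hb2', hb3'⟩ := (occ_mem hPne j).mp hj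
          have hlenb : P.length ≤ T.length - (j - 1) := by
            have := hb3'.length_le; rwa [List.length_drop] at this
          have hcj := prefix_drop_char hb1' hb3' (k := P.length - 1) (by omega)
          rw [hlast] at hcj
          have hjn : j + (P.length - 1) = n := by
            by_contra hne'
            have hr : j + (P.length - 1) ∈ Finset.Icc 1 (n - 1) := by
              rw [Finset.mem_Icc]
              omega
            exact hdollar _ hr hcj
          omega
        have hcard1 := Finset.card_le_one.mpr
          (fun a ha b' hb' => by rw [huni a ha, huni b' hb'])
        omega
      obtain ⟨j0, hj0⟩ := Finset.card_pos.mp (by omega : 0 < (OccF T P).card)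
      have hj0n := hnoend j0 hj0
      have hj0occ := occ_extend hPne hj0 (by omega)
      have h1j0 : 1 ≤ j0 := ((occ_mem hPne j0).mp hj0).1
      have hc0sig : idx T (j0 + P.length) ∈ Finset.Icc 1 σ :=
        hchar_sigma _ (by omega) (by omega)
      have hc0inf : (P ++ [idx T (j0 + P.length)]) <:+: T :=
        (infix_iff_occ (by simp)).mpr ⟨j0, hj0occ⟩
      have hc0C : idx T (j0 + P.length) ∈ C := Finset.mem_filter.mpr ⟨hc0sig, hc0inf⟩
      have hsub : OccF T P ⊆ OccF T (P ++ [idx T (j0 + P.length)]) := by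
        intro j hj
        have hjn := hnoend j hj
        have h1j : 1 ≤ j := ((occ_mem hPne j).mp hj).1
        have hjocc := occ_extend hPne hj (by omega)
        have hcsig : idx T (j + P.length) ∈ Finset.Icc 1 σ :=
          hchar_sigma _ (by omega) (by omega)
        have hcinf : (P ++ [idx T (j + P.length)]) <:+: T :=
          (infix_iff_occ (by simp)).mpr ⟨j, hjocc⟩
        have hcC : idx T (j + P.length) ∈ C := Finset.mem_filter.mpr ⟨hcsig, hcinf⟩
        have heq : idx T (j + P.length) = idx T (j0 + P.length) :=
          Finset.card_le_one.mp hC1' _ hcC _ hc0C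
        rwa [heq] at hjocc
      have hle := Finset.card_le_card hsub
      have hlt := hright _ hc0sig
      omega
    · intro h2C
      obtain ⟨c1, hc1, c2, hc2, hcc⟩ := Finset.one_lt_card.mp h2C
      rw [Finset.mem_filter] at hc1 hc2
      obtain ⟨j1, hj1⟩ := (infix_iff_occ (P := P ++ [c1]) (by simp)).mp hc1.2
      obtain ⟨j2, hj2⟩ := (infix_iff_occ (P := P ++ [c2]) (by simp)).mp hc2.2
      have hne12 : j1 ≠ j2 := by
        intro h
        apply hcc
        rw [← occ_child_char hj1, ← occ_child_char hj2, h]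
      have h2occ : 2 ≤ (OccF T P).card := Finset.one_lt_card.mpr
        ⟨j1, occ_child_subset hj1, j2, occ_child_subset hj2, hne12⟩
      refine ⟨h2occ, fun c hc => ?_⟩
      have hwit : ∃ j' ∈ OccF T P, j' ∉ OccF T (P ++ [c]) := by
        by_cases h : c = c1
        · refine ⟨j2, occ_child_subset hj2, fun hmem => ?_⟩
          apply hcc
          rw [← h, ← occ_child_char hmem, occ_child_char hj2]
        · refine ⟨j1, occ_child_subset hj1, fun hmem => ?_⟩
          apply h
          rw [← occ_child_char hmem, occ_child_char hj1]
      obtain ⟨j', hj'1, hj'2⟩ := hwit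
      exact Finset.card_lt_card
        ((Finset.ssubset_iff_of_subset occ_child_subset).mpr ⟨j', hj'1, hj'2⟩)
  have hrank := rank_ne_iff (L := L) hb1 hen hbee
  have hLval : ∀ i ∈ Finset.Icc 1 n, SA i ≠ 1 → L i = idx T (SA i - 1) := by
    intro i hi hne
    rw [hL i hi, hLF i hi hne]
  have hLval1 : ∀ i ∈ Finset.Icc 1 n, SA i = 1 → L i = idx T n := by
    intro i hi h1
    rw [hL i hi, hLF1 i hi h1]
  constructor
  · rintro ⟨h2, hall⟩
    refine ⟨?_, ?_⟩
    · rw [hchild]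
      exact hRight.mp ⟨h2, fun c hc => (hall c hc).2⟩
    · rw [hrank]
      by_contra hno
      have hconst := const_of_no_break hno
      have hblt : b < e := by omega
      have hbI : b ∈ Finset.Icc 1 n := Finset.mem_Icc.mpr ⟨by omega, by omega⟩
      have heI : e ∈ Finset.Icc 1 n := Finset.mem_Icc.mpr ⟨by omega, by omega⟩
      have hex : ∃ k, k ∈ Finset.Icc 1 n ∧ b ≤ k ∧ k ≤ e ∧ SA k ≠ 1 := by
        by_cases hb' : SA b = 1
        · refine ⟨e, heI, by omega, le_refl e, fun he' => ?_⟩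
          exact absurd (hinj b hbI e heI (by rw [hb', he'])) (by omega)
        · exact ⟨b, hbI, le_refl b, by omega, hb'⟩
      obtain ⟨i0, hi0I, hbi0, hi0e, hSAi0⟩ := hex
      have hSAi0mem := hSA_mem i0 hi0I
      rw [Finset.mem_Icc] at hSAi0mem
      have hcsig : idx T (SA i0 - 1) ∈ Finset.Icc 1 σ :=
        halpha _ (idx_mem (by omega) (by omega))
      have hcne : idx T (SA i0 - 1) ≠ idx T n :=
        hdollar _ (Finset.mem_Icc.mpr ⟨by omega, by omega⟩)
      have hLi0 : L i0 = idx T (SA i0 - 1) := hLval i0 hi0I hSAi0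
      have hAeq : (OccF T P).filter
          (fun j => 2 ≤ j ∧ idx T (j - 1) = idx T (SA i0 - 1)) = OccF T P := by
        apply Finset.Subset.antisymm (Finset.filter_subset _ _)
        intro j hj
        obtain ⟨i, hi, rfl⟩ := (hOccIff j).mp hj
        rw [Finset.mem_Icc] at hi
        have hiI : i ∈ Finset.Icc 1 n := Finset.mem_Icc.mpr ⟨by omega, by omega⟩
        have hLi : L i = idx T (SA i0 - 1) := by
          rw [hconst i hi.1 hi.2, ← hconst i0 hbi0 hi0e, hLi0]
        have hSAine : SA i ≠ 1 := by
          intro h1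
          have hx := hLval1 i hiI h1
          rw [hLi] at hx
          exact hcne hx
        have hSAimem := hSA_mem i hiI
        rw [Finset.mem_Icc] at hSAimem
        rw [Finset.mem_filter]
        refine ⟨hj, by omega, ?_⟩
        rw [← hLi, hLval i hiI hSAine]
      have hcon := (hall _ hcsig).1
      rw [occ_cons_card hPne _, hAeq] at hcon
      exact lt_irrefl _ hcon
  · rintro ⟨hexp, hrk⟩
    rw [hchild] at hexp
    obtain ⟨h2, hright⟩ := hRight.mpr hexp
    refine ⟨h2, fun c hc => ⟨?_, hright c hc⟩⟩
    rw [occ_cons_card hPne c]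
    have hneA : (OccF T P).filter (fun j => 2 ≤ j ∧ idx T (j - 1) = c)
        ≠ OccF T P := by
      intro hAeq
      rw [hrank] at hrk
      obtain ⟨i0, hig, hie, hLne⟩ := hrk
      have hLconst : ∀ i, b ≤ i → i ≤ e → L i = c := by
        intro i hbi hie'
        have hiI : i ∈ Finset.Icc 1 n := Finset.mem_Icc.mpr ⟨by omega, by omega⟩
        have hSAiocc : SA i ∈ OccF T P := hSAOcc i (Finset.mem_Icc.mpr ⟨hbi, hie'⟩)
        rw [← hAeq, Finset.mem_filter] at hSAiocc
        obtain ⟨_, h2i, hchar⟩ := hSAiocc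
        rw [hLval i hiI (by omega), hchar]
      exact hLne (by rw [hLconst i0 (by omega) hie, hLconst (i0 - 1) (by omega) (by omega)])
    exact Finset.card_lt_card
      (Finset.ssubset_iff_subset_ne.mpr ⟨Finset.filter_subset _ _, hneA⟩)
end

section
/- Let c, c' ∈ Σ and let P be a (possibly empty) string such that the string cPc' is a minimal unique substring of T. Then the node u_P is explicit, i.e., |children(P)| ≥ 2. -/
lemma prefix_snoc17 {Q L : List ℕ} (h : Q <+: L) (hk : Q.length < L.length) :
    Q ++ [L.getD Q.length 0] <+: L := by
  obtain ⟨t, rfl⟩ := h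
  cases t with
  | nil => simp at hk
  | cons a t =>
    refine ⟨t, ?_⟩
    have : (Q ++ a :: t).getD Q.length 0 = a := by
      rw [List.getD_eq_getElem _ _ (by simpa using hk)]
      simp [List.getElem_append_right]
    rw [this]
    simp

lemma getD_of_prefix17 {Q T : List ℕ} {s k : ℕ} (h : Q <+: T.drop s) (hk : k < Q.length) :
    Q.getD k 0 = T.getD (s + k) 0 := by
  have hl := h.length_le
  rw [List.length_drop] at hl
  have hkT : s + k < T.length := by omega
  rw [List.getD_eq_getElem _ _ hk, List.getD_eq_getElem _ _ hkT]
  rw [h.getElem hk, List.getElem_drop]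

theorem stmt17
    (σ n : ℕ) (T : List ℕ)
    (hn : 2 ≤ n) (hlen : T.length = n)
    (halpha : ∀ c ∈ T, c ∈ Finset.Icc 1 σ)
    (hocc : ∀ c ∈ Finset.Icc 1 σ, c ∈ T)
    (hdollar : ∀ i ∈ Finset.Icc 1 (n - 1), idx T i ≠ idx T n)
    (c c' : ℕ) (hc : c ∈ Finset.Icc 1 σ) (hc' : c' ∈ Finset.Icc 1 σ)
    (P : List ℕ) (hPalpha : ∀ a ∈ P, a ∈ Finset.Icc 1 σ)
    (h1 : (OccF T (c :: (P ++ [c']))).card = 1)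
    (h2 : 2 ≤ (OccF T (P ++ [c'])).card)
    (h3 : 2 ≤ (OccF T (c :: P)).card) :
    2 ≤ (childrenSet σ T P).ncard := by
  set m := P.length with hm
  have mem_Occ : ∀ Q : List ℕ, ∀ i, i ∈ OccF T Q ↔
      (1 ≤ i ∧ i ≤ n - Q.length + 1) ∧ Q <+: T.drop (i - 1) := by
    intro Q i
    simp [OccF, Finset.mem_filter, Finset.mem_Icc, hlen, and_assoc]
  -- occurrence of P ++ [c']
  obtain ⟨j, hj⟩ := Finset.card_pos.mp (by omega : 0 < (OccF T (P ++ [c'])).card)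
  rw [mem_Occ] at hj
  obtain ⟨⟨hj1, hj2⟩, hjp⟩ := hj
  have hjlen : j - 1 + (m + 1) ≤ n := by
    have := hjp.length_le
    rw [List.length_drop, hlen] at this
    simp [hm] at this
    omega
  -- two distinct occurrences of c :: P
  obtain ⟨i₁, hi₁, i₂, hi₂, hne⟩ := Finset.one_lt_card.mp h3
  -- no occurrence of c :: P reaches the end of T
  have no_suffix : ∀ i ∈ OccF T (c :: P), i + m + 1 ≤ n := by
    intro i hi
    rw [mem_Occ] at hi
    obtain ⟨⟨hi1, hi2⟩, hpre⟩ := hi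
    have hilen : i - 1 + (m + 1) ≤ n := by
      have := hpre.length_le
      rw [List.length_drop, hlen] at this
      simp [hm] at this
      omega
    by_contra hcon
    have heqn : i - 1 + (m + 1) = n := by omega
    rcases eq_or_ne P [] with rfl | hPne
    · -- P is empty : c is the last character of T
      simp only [hm, List.length_nil] at heqn hilen hcon hi2
      have hc_last : T.getD (i - 1) 0 = c := by
        have := getD_of_prefix17 (k := 0) hpre (by simp)
        simpa using this.symm
      have hc_n : T.getD (n - 1) 0 = c := by
        rw [show n - 1 = i - 1 by omega]
        exact hc_last
      -- every occurrence of [c] equals n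
      have hsub : OccF T (c :: ([] : List ℕ)) ⊆ {n} := by
        intro i' hi'
        rw [mem_Occ] at hi'
        obtain ⟨⟨h1', h2'⟩, hp'⟩ := hi'
        have hc_i' : T.getD (i' - 1) 0 = c := by
          have := getD_of_prefix17 (k := 0) hp' (by simp)
          simpa using this.symm
        have : i' = n := by
          by_contra hne'
          have hlt : i' ≤ n - 1 := by simp at h2'; omega
          exact hdollar i' (Finset.mem_Icc.mpr ⟨h1', hlt⟩)
            (by simp only [idx]; rw [hc_i', hc_n])
        simp [this]
      have := Finset.card_le_card hsub
      simp at this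
      omega
    · -- P is nonempty : its last character would be the unique last char of T,
      -- contradicting that P ++ [c'] occurs in T
      have hm1 : 1 ≤ m := by
        cases P with
        | nil => exact absurd rfl hPne
        | cons a l => simp [hm]
      -- last char of c :: P is T's last char
      have h_last : P.getD (m - 1) 0 = T.getD (n - 1) 0 := by
        have := getD_of_prefix17 hpre (k := m) (by simp [hm])
        rw [show m = (m - 1) + 1 by omega, List.getD_cons_succ] at this
        rw [this]
        congr 1
        omega
      -- char of the j-occurrence at position m-1 is P's last char
      have h_j : P.getD (m - 1) 0 = T.getD (j - 1 + (m - 1)) 0 := by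
        have := getD_of_prefix17 hjp (k := m - 1) (by simp [hm])
        rw [List.getD_append _ _ _ _ (by omega)] at this
        exact this
      have hpos : j + m - 1 ∈ Finset.Icc 1 (n - 1) := Finset.mem_Icc.mpr ⟨by omega, by omega⟩
      apply hdollar _ hpos
      simp only [idx]
      rw [show j + m - 1 - 1 = j - 1 + (m - 1) by omega, ← h_j, h_last]
  -- extension character of an occurrence of c :: P
  have ext_char : ∀ i ∈ OccF T (c :: P),
      (c :: P) ++ [T.getD (i + m) 0] <+: T.drop (i - 1) ∧ T.getD (i + m) 0 ∈ T := by
    intro i hi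
    have hend := no_suffix i hi
    rw [mem_Occ] at hi
    obtain ⟨⟨hi1, hi2⟩, hpre⟩ := hi
    have hklen : (c :: P).length < (T.drop (i - 1)).length := by
      rw [List.length_drop, hlen]
      simp [hm]
      omega
    have hsnoc := prefix_snoc17 hpre hklen
    have hchar : (T.drop (i - 1)).getD (c :: P).length 0 = T.getD (i + m) 0 := by
      have := getD_of_prefix17 (List.prefix_refl (T.drop (i - 1))) hklen
      rw [this]
      congr 1
      simp [hm]
      omega
    rw [hchar] at hsnoc
    refine ⟨hsnoc, ?_⟩
    have hin : i + m < T.length := by omega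
    rw [List.getD_eq_getElem _ _ hin]
    exact List.getElem_mem hin
  -- from an occurrence, get a child of P
  have child_of : ∀ i ∈ OccF T (c :: P), P ++ [T.getD (i + m) 0] ∈ childrenSet σ T P := by
    intro i hi
    obtain ⟨hsnoc, hmem⟩ := ext_char i hi
    refine ⟨T.getD (i + m) 0, halpha _ hmem, rfl, ?_⟩
    have hsuf : (P ++ [T.getD (i + m) 0]) <:+ (c :: P) ++ [T.getD (i + m) 0] := ⟨[c], by simp⟩
    exact hsuf.isInfix.trans (hsnoc.isInfix.trans (List.drop_suffix _ _).isInfix)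
  -- if the extension char is c', the occurrence is an occurrence of c :: (P ++ [c'])
  have full_occ : ∀ i ∈ OccF T (c :: P), T.getD (i + m) 0 = c' →
      i ∈ OccF T (c :: (P ++ [c'])) := by
    intro i hi hd
    obtain ⟨hsnoc, -⟩ := ext_char i hi
    have hend := no_suffix i hi
    rw [mem_Occ] at hi
    obtain ⟨⟨hi1, hi2⟩, -⟩ := hi
    rw [hd] at hsnoc
    rw [mem_Occ]
    refine ⟨⟨hi1, by simp [hm]; omega⟩, ?_⟩
    simpa using hsnoc
  -- one of the two occurrences extends with a char ≠ c'
  have hone : ∃ i ∈ OccF T (c :: P), T.getD (i + m) 0 ≠ c' := by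
    by_contra hcon
    push_neg at hcon
    obtain ⟨a, ha⟩ := Finset.card_eq_one.mp h1
    have e1 : i₁ = a := by
      have := full_occ i₁ hi₁ (hcon i₁ hi₁); rw [ha] at this; simpa using this
    have e2 : i₂ = a := by
      have := full_occ i₂ hi₂ (hcon i₂ hi₂); rw [ha] at this; simpa using this
    exact hne (e1.trans e2.symm)
  obtain ⟨i, hi, hd⟩ := hone
  -- two distinct children : P ++ [c'] and P ++ [d]
  have hchild1 : P ++ [c'] ∈ childrenSet σ T P :=
    ⟨c', hc', rfl, hjp.isInfix.trans (List.drop_suffix _ _).isInfix⟩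
  have hchild2 := child_of i hi
  have hfin : (childrenSet σ T P).Finite := by
    apply Set.Finite.subset ((Set.finite_Icc 1 σ).image (fun a => P ++ [a]))
    rintro Q ⟨a, ha, rfl, -⟩
    exact ⟨a, by simpa using ha, rfl⟩
  have : 1 < (childrenSet σ T P).ncard := by
    rw [Set.one_lt_ncard hfin]
    refine ⟨P ++ [c'], hchild1, P ++ [T.getD (i + m) 0], hchild2, ?_⟩
    intro heq
    exact hd (by simpa using (List.append_cancel_left heq).symm)
  omega
end
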